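/- For every odd n ≥ 3, a_n(μ) = (a_{(n+1)/2}(μ) − a_{(n−3)/2}(μ)) · a_{(n−1)/2}(μ). -/
import Mathlib


noncomputable def a (μ : ℝ) : ℕ → ℝ
  | 0 => 1
  | 1 => 2 * (1 - μ)
  | n + 2 => 2 * (1 - μ) * a μ (n + 1) - a μ n

lemma a_add (μ : ℝ) : ∀ k m : ℕ,
    a μ (m + k + 2) = a μ (m + 1) * a μ (k + 1) - a μ m * a μ k := by
  intro k
  induction k using Nat.twoStepInduction with
  | zero => intro m; simp [a]; ring
  | one =>
    intro m
    have h3 : m + 1 + 2 = m + 3 := by ring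
    show a μ (m + 3) = _
    rw [show m + 3 = (m + 1) + 2 from by ring, a, a,
      show m + 2 = m + 2 from rfl]
    simp [a]
    ring
  | more k ih1 ih2 =>
    intro m
    have e1 : m + (k + 2) + 2 = (m + k + 2) + 2 := by ring
    rw [e1, a]
    have e2 : m + k + 2 + 1 = m + (k + 1) + 2 := by ring
    rw [e2, ih2, ih1]
    have h : a μ (k + 1 + 2) = 2 * (1 - μ) * a μ (k + 2) - a μ (k + 1) := rfl
    have h2 : a μ (k + 2) = 2 * (1 - μ) * a μ (k + 1) - a μ k := rfl
    rw [h, show k + 1 + 1 = k + 2 from rfl, h2]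
    ring

theorem stmt6 (n : ℕ) (hn : 3 ≤ n) (hodd : Odd n) (μ : ℝ) :
    a μ n = (a μ ((n + 1) / 2) - a μ ((n - 3) / 2)) * a μ ((n - 1) / 2) := by
  obtain ⟨l, hl⟩ := hodd
  obtain ⟨m, rfl⟩ : ∃ m, n = 2 * m + 3 := ⟨l - 1, by omega⟩
  have h1 : (2 * m + 3 + 1) / 2 = m + 2 := by omega
  have h2 : (2 * m + 3 - 3) / 2 = m := by omega
  have h3 : (2 * m + 3 - 1) / 2 = m + 1 := by omega
  rw [h1, h2, h3]
  have := a_add μ m (m + 1)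
  rw [show m + 1 + m + 2 = 2 * m + 3 from by ring] at this
  rw [this]
  ring
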